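/- Let β > 0 and suppose β < ξ(x) for every x ∈ (0,1/2) (i.e., β is below the minimum value β₁ of ξ). Define G_β on the open domain D = {(x₁,x₂,y₁,y₂) ∈ ℝ⁴ : x₁, x₂, y₁, y₂ > 0, x₁ + x₂ < 1, y₁ + y₂ < 1} by G_β(x₁,x₂,y₁,y₂) = −∑_{i=1}^{3} x_i y_i + (1/β)∑_{i=1}^{3}(x_i log x_i + y_i log y_i), where x₃ = 1 − x₁ − x₂ and y₃ = 1 − y₁ − y₂. Then (1/3, 1/3, 1/3, 1/3) is the unique critical point of G_β on D, and it is the unique local minimum of G_β on D. -/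

import Mathlib

open Real Set

/-- ξ(x) = (1/(1−3x)) log((1−2x)/x), continuously extended by ξ(1/3) = 3. -/
noncomputable def xi (x : ℝ) : ℝ :=
  if x = 1 / 3 then 3 else (1 / (1 - 3 * x)) * Real.log ((1 - 2 * x) / x)

/-- The free energy of the two-component three-spin model with no component-wise
interaction (J = ∞), in coordinates (x₁, x₂, y₁, y₂) with x₃ = 1 − x₁ − x₂ and
y₃ = 1 − y₁ − y₂. -/
noncomputable def G3 (β : ℝ) (x : Fin 4 → ℝ) : ℝ :=
  -(x 0 * x 2 + x 1 * x 3 + (1 - x 0 - x 1) * (1 - x 2 - x 3))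
    + (1 / β) * (x 0 * Real.log (x 0) + x 1 * Real.log (x 1)
        + (1 - x 0 - x 1) * Real.log (1 - x 0 - x 1)
        + x 2 * Real.log (x 2) + x 3 * Real.log (x 3)
        + (1 - x 2 - x 3) * Real.log (1 - x 2 - x 3))

/-- The open domain D: product of two open 2-simplices. -/
def D3 : Set (Fin 4 → ℝ) :=
  {x | 0 < x 0 ∧ 0 < x 1 ∧ 0 < x 2 ∧ 0 < x 3 ∧ x 0 + x 1 < 1 ∧ x 2 + x 3 < 1}

/- ======================= auxiliary lemmas ======================= -/

lemma psi_deriv (β s : ℝ) (hs : 0 < s) :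
    HasDerivAt (fun r : ℝ => r * Real.log (3*r) - (r - 1/3) - (β/2)*(r-1/3)^2)
      (Real.log (3*s) - β*(s-1/3)) s := by
  have hid : HasDerivAt (fun r : ℝ => r) 1 s := hasDerivAt_id s
  have h3 : HasDerivAt (fun r : ℝ => 3*r) 3 s := by simpa using hid.const_mul 3
  have hlog : HasDerivAt (fun r : ℝ => Real.log (3*r)) (3/(3*s)) s := h3.log (by positivity)
  have hm : HasDerivAt (fun r : ℝ => r * Real.log (3*r))
      (1 * Real.log (3*s) + s * (3/(3*s))) s := hid.mul hlog
  have hq : HasDerivAt (fun r : ℝ => (r - 1/3)^2) (2*(s-1/3)) s := by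
    exact ((hid.sub_const (1/3)).fun_pow 2).congr_deriv (by norm_num)
  have h := (hm.sub (hid.sub_const (1/3))).sub (hq.const_mul (β/2))
  refine h.congr_deriv ?_
  have hs' : s ≠ 0 := hs.ne'
  field_simp
  ring

lemma scalar_bound (β : ℝ) (hβ : 0 < β) (hβ3 : β < 3) (t : ℝ) (ht1 : 1/6 ≤ t) (ht2 : t ≤ 1/β) :
    (t - 1/3) + (β/2)*(t - 1/3)^2 ≤ t * Real.log (3*t) := by
  set ψ : ℝ → ℝ := fun r => r * Real.log (3*r) - (r - 1/3) - (β/2)*(r-1/3)^2 with hψ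
  have hψ13 : ψ (1/3) = 0 := by norm_num [hψ]
  have h13β : (1:ℝ)/3 < 1/β := one_div_lt_one_div_of_lt hβ hβ3
  suffices h : 0 ≤ ψ t by simp only [hψ] at h; linarith
  rcases le_total t (1/3) with hc | hc
  · have anti : AntitoneOn ψ (Icc (1/6) (1/3)) := by
      apply antitoneOn_of_deriv_nonpos (convex_Icc _ _)
      · exact fun s hs => ((psi_deriv β s (by have := hs.1; norm_num at this ⊢; linarith)).continuousAt).continuousWithinAt
      · rw [interior_Icc]
        exact fun s hs => ((psi_deriv β s (by have := hs.1; linarith)).differentiableAt).differentiableWithinAt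
      · rw [interior_Icc]
        intro s hs
        rw [(psi_deriv β s (by have := hs.1; linarith)).deriv]
        have hlb := Real.log_le_sub_one_of_pos (show (0:ℝ) < 3*s by nlinarith [hs.1])
        nlinarith [hs.1, hs.2, mul_nonneg (show (0:ℝ) ≤ 3 - β by linarith)
          (show (0:ℝ) ≤ 1/3 - s by linarith [hs.2])]
    have := anti ⟨ht1, hc⟩ ⟨by norm_num, le_rfl⟩ hc
    rw [hψ13] at this; exact this
  · have mono : MonotoneOn ψ (Icc (1/3) (1/β)) := by
      apply monotoneOn_of_deriv_nonneg (convex_Icc _ _)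
      · exact fun s hs => ((psi_deriv β s (by have := hs.1; linarith)).continuousAt).continuousWithinAt
      · rw [interior_Icc]
        exact fun s hs => ((psi_deriv β s (by have := hs.1; linarith)).differentiableAt).differentiableWithinAt
      · rw [interior_Icc]
        intro s hs
        rw [(psi_deriv β s (by have := hs.1; linarith)).deriv]
        have hs0 : (0:ℝ) < s := by linarith [hs.1]
        have hlb := Real.log_le_sub_one_of_pos (show (0:ℝ) < 1/(3*s) by positivity)
        rw [one_div, Real.log_inv] at hlb
        have hβs : β * s ≤ 1 := by
          have h2 := hs.2
          rw [lt_div_iff₀ hβ] at h2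
          linarith
        have h3s : (3*s) * ((3*s)⁻¹) = 1 := by field_simp
        nlinarith [hs.1, mul_nonneg (show (0:ℝ) ≤ 3*s - 1 by linarith [hs.1])
          (show (0:ℝ) ≤ 1 - β*s by linarith), mul_pos (show (0:ℝ) < 3*s by linarith)
          (show (0:ℝ) < (3*s)⁻¹ by positivity)]
    have := mono ⟨le_rfl, le_of_lt h13β⟩ ⟨hc, ht2⟩ hc
    rw [hψ13] at this; exact this

lemma xi_contra {β x : ℝ} (hβ₁ : ∀ y ∈ Ioo (0:ℝ) (1/2), β < xi y)
    (hx0 : 0 < x) (hx2 : x < 1/2) (hne : x ≠ 1/3)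
    (h : Real.log x - Real.log (1 - 2*x) = β * (3*x - 1)) : False := by
  have hxi := hβ₁ x ⟨hx0, hx2⟩
  rw [xi, if_neg hne] at hxi
  have h12 : (0:ℝ) < 1 - 2*x := by linarith
  rw [Real.log_div h12.ne' hx0.ne'] at hxi
  have h3 : 1 - 3*x ≠ 0 := fun h' => hne (by linarith)
  have he : Real.log (1 - 2*x) - Real.log x = β * (1 - 3*x) := by linarith
  rw [he] at hxi
  have : 1 / (1 - 3*x) * (β * (1 - 3*x)) = β := by field_simp
  rw [this] at hxi
  exact lt_irrefl _ hxi

lemma concave_contra {β x y z : ℝ} (hx : 0 < x) (hz : 0 < z) (hxy : x < y) (hyz : y < z)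
    (h1 : Real.log x - β*x = Real.log y - β*y)
    (h2 : Real.log y - β*y = Real.log z - β*z) : False := by
  set lam := (z - y)/(z - x) with hlam
  set mu := (y - x)/(z - x) with hmu
  have hzx : (0:ℝ) < z - x := by linarith
  have hl : 0 < lam := by apply div_pos <;> linarith
  have hm : 0 < mu := by apply div_pos <;> linarith
  have hs : lam + mu = 1 := by rw [hlam, hmu]; field_simp; ring
  have hpt : lam * x + mu * z = y := by rw [hlam, hmu]; field_simp; ring
  have hcc := strictConcaveOn_log_Ioi.2 (mem_Ioi.mpr hx) (mem_Ioi.mpr hz)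
    (ne_of_lt (hxy.trans hyz)) hl hm hs
  rw [smul_eq_mul, smul_eq_mul, smul_eq_mul, smul_eq_mul, hpt] at hcc
  have hx' : Real.log x = Real.log y - β*y + β*x := by linarith
  have hz' : Real.log z = Real.log y - β*y + β*z := by linarith
  rw [hx', hz'] at hcc
  have key : lam * (Real.log y - β*y + β*x) + mu * (Real.log y - β*y + β*z) = Real.log y := by
    linear_combination (Real.log y - β*y) * hs + β * hpt
  linarith

lemma concave_contra3 {β x y z : ℝ} (hx : 0 < x) (hy : 0 < y) (hz : 0 < z)
    (hxy : x ≠ y) (hxz : x ≠ z) (hyz : y ≠ z)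
    (e1 : Real.log x - β*x = Real.log y - β*y)
    (e2 : Real.log y - β*y = Real.log z - β*z) : False := by
  rcases lt_trichotomy x y with h1 | h1 | h1
  · rcases lt_trichotomy y z with h2 | h2 | h2
    · exact concave_contra (β := β) hx hz h1 h2 e1 e2
    · exact hyz h2
    · rcases lt_trichotomy x z with h3 | h3 | h3
      · exact concave_contra (β := β) hx hy h3 h2 (by linarith) (by linarith)
      · exact hxz h3
      · exact concave_contra (β := β) hz hy h3 h1 (by linarith) (by linarith)
  · exact hxy h1
  · rcases lt_trichotomy x z with h2 | h2 | h2
    · exact concave_contra (β := β) hy hz h1 h2 (by linarith) (by linarith)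
    · exact hxz h2
    · rcases lt_trichotomy y z with h3 | h3 | h3
      · exact concave_contra (β := β) hy hx h3 h2 (by linarith) (by linarith)
      · exact hyz h3
      · exact concave_contra (β := β) hz hx h3 h1 (by linarith) (by linarith)

lemma mono_log {s t : ℝ} (hs : 0 < s) (ht : 0 < t) :
    0 ≤ (s - t) * (Real.log s - Real.log t) := by
  rcases le_total t s with h | h
  · exact mul_nonneg (by linarith) (by linarith [Real.log_le_log ht h])
  · have h1 : 0 ≤ (t - s) * (Real.log t - Real.log s) :=
      mul_nonneg (by linarith) (by linarith [Real.log_le_log hs h])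
    nlinarith [h1]

lemma hdAux (β a c u w A B : ℝ) (ha : 0 < a) (hc : 0 < c) :
    HasDerivAt (fun t : ℝ => -((a + t) * u + A + (c - t) * w)
      + (1/β) * ((a + t) * Real.log (a + t) + (c - t) * Real.log (c - t) + B))
      ((w - u) + (1/β) * (Real.log a - Real.log c)) 0 := by
  have h1 : HasDerivAt (fun t : ℝ => a + t) 1 0 := by
    simpa using (hasDerivAt_id (0:ℝ)).const_add a
  have h2 : HasDerivAt (fun t : ℝ => c - t) (-1) 0 := by
    simpa using (hasDerivAt_id (0:ℝ)).const_sub c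
  have hl1 : HasDerivAt (fun t : ℝ => Real.log (a + t)) (1 / (a + 0)) 0 :=
    h1.log (by simpa using ha.ne')
  have hl2 : HasDerivAt (fun t : ℝ => Real.log (c - t)) ((-1) / (c - 0)) 0 :=
    h2.log (by simpa using hc.ne')
  have e1 : HasDerivAt (fun t : ℝ => (a + t) * Real.log (a + t))
      (1 * Real.log (a + 0) + (a + 0) * (1 / (a + 0))) 0 := h1.mul hl1
  have e2 : HasDerivAt (fun t : ℝ => (c - t) * Real.log (c - t))
      ((-1) * Real.log (c - 0) + (c - 0) * ((-1) / (c - 0))) 0 := h2.mul hl2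
  have hcoup : HasDerivAt (fun t : ℝ => -((a + t) * u + A + (c - t) * w))
      (-(1 * u + (-1) * w)) 0 := (((h1.mul_const u).add_const A).add (h2.mul_const w)).neg
  have hent := ((e1.add e2).add_const B).const_mul (1/β)
  have h := hcoup.add hent
  refine h.congr_deriv ?_
  have ha' : a + 0 ≠ 0 := by simpa using ha.ne'
  have hc' : c - 0 ≠ 0 := by simpa using hc.ne'
  simp only [add_zero, sub_zero] at *
  field_simp
  ring

lemma diffAt (β : ℝ) (p : Fin 4 → ℝ) (h0 : p 0 ≠ 0) (h1 : p 1 ≠ 0) (h2 : p 2 ≠ 0)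
    (h3 : p 3 ≠ 0) (hX : 1 - p 0 - p 1 ≠ 0) (hY : 1 - p 2 - p 3 ≠ 0) :
    DifferentiableAt ℝ (G3 β) p := by
  have dp : ∀ i : Fin 4, DifferentiableAt ℝ (fun x : Fin 4 → ℝ => x i) p := fun i =>
    (ContinuousLinearMap.proj i : (Fin 4 → ℝ) →L[ℝ] ℝ).differentiableAt
  have dX : DifferentiableAt ℝ (fun x : Fin 4 → ℝ => 1 - x 0 - x 1) p :=
    ((differentiableAt_const 1).sub (dp 0)).sub (dp 1)
  have dY : DifferentiableAt ℝ (fun x : Fin 4 → ℝ => 1 - x 2 - x 3) p :=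
    ((differentiableAt_const 1).sub (dp 2)).sub (dp 3)
  have hG : G3 β = fun x : Fin 4 → ℝ =>
      -(x 0 * x 2 + x 1 * x 3 + (1 - x 0 - x 1) * (1 - x 2 - x 3))
      + (1 / β) * (x 0 * Real.log (x 0) + x 1 * Real.log (x 1)
          + (1 - x 0 - x 1) * Real.log (1 - x 0 - x 1)
          + x 2 * Real.log (x 2) + x 3 * Real.log (x 3)
          + (1 - x 2 - x 3) * Real.log (1 - x 2 - x 3)) := rfl
  rw [hG]
  exact ((((dp 0).mul (dp 2)).add (((dp 1).mul (dp 3))) |>.add (dX.mul dY)).neg).add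
    ((((((((dp 0).mul ((dp 0).log h0)).add ((dp 1).mul ((dp 1).log h1))).add
      (dX.mul (dX.log hX))).add ((dp 2).mul ((dp 2).log h2))).add
      ((dp 3).mul ((dp 3).log h3))).add (dY.mul (dY.log hY))).const_mul (1/β))

/- ======================= local min ======================= -/

lemma localmin (β : ℝ) (hβ : 0 < β) (hβ3 : β < 3) :
    IsLocalMin (G3 β) ![1/3, 1/3, 1/3, 1/3] := by
  set c : Fin 4 → ℝ := ![1/3, 1/3, 1/3, 1/3] with hcdef
  set ρ : ℝ := min (1/β - 1/3) (1/6) with hρdef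
  have h13β : (1:ℝ)/3 < 1/β := one_div_lt_one_div_of_lt hβ hβ3
  have hρ0 : 0 < ρ := lt_min (by linarith) (by norm_num)
  have hρa : ρ ≤ 1/β - 1/3 := min_le_left _ _
  have hρb : ρ ≤ 1/6 := min_le_right _ _
  show ∀ᶠ x in nhds c, G3 β c ≤ G3 β x
  rw [Metric.eventually_nhds_iff]
  refine ⟨ρ/2, by positivity, fun x hx => ?_⟩
  have hd : ∀ i : Fin 4, |x i - 1/3| < ρ/2 := by
    intro i
    have h1 := dist_le_pi_dist x c i
    have h2 : c i = 1/3 := by fin_cases i <;> norm_num [hcdef]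
    rw [Real.dist_eq, h2] at h1
    linarith [lt_of_le_of_lt h1 hx]
  have hbound : ∀ t : ℝ, |t - 1/3| ≤ ρ →
      (t - 1/3) + (β/2)*(t - 1/3)^2 ≤ t * Real.log (3*t) := by
    intro t ht
    have h1 := abs_le.mp ht
    exact scalar_bound β hβ hβ3 t (by linarith [h1.1]) (by linarith [h1.2])
  have habs : ∀ i : Fin 4, |x i - 1/3| ≤ ρ := fun i => le_of_lt (lt_of_lt_of_le (hd i) (by linarith))
  have hXabs : |(1 - x 0 - x 1) - 1/3| ≤ ρ := by
    have h := abs_add_le (-(x 0 - 1/3)) (-(x 1 - 1/3))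
    rw [abs_neg, abs_neg] at h
    have : (1 - x 0 - x 1) - 1/3 = -(x 0 - 1/3) + -(x 1 - 1/3) := by ring
    rw [this]
    calc |(-(x 0 - 1/3)) + -(x 1 - 1/3)| ≤ |(-(x 0 - 1/3))| + |(-(x 1 - 1/3))| := abs_add_le _ _
      _ = |x 0 - 1/3| + |x 1 - 1/3| := by rw [abs_neg, abs_neg]
      _ ≤ ρ := by linarith [hd 0, hd 1]
  have hYabs : |(1 - x 2 - x 3) - 1/3| ≤ ρ := by
    have : (1 - x 2 - x 3) - 1/3 = -(x 2 - 1/3) + -(x 3 - 1/3) := by ring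
    rw [this]
    calc |(-(x 2 - 1/3)) + -(x 3 - 1/3)| ≤ |(-(x 2 - 1/3))| + |(-(x 3 - 1/3))| := abs_add_le _ _
      _ = |x 2 - 1/3| + |x 3 - 1/3| := by rw [abs_neg, abs_neg]
      _ ≤ ρ := by linarith [hd 2, hd 3]
  have s0 := hbound (x 0) (habs 0)
  have s1 := hbound (x 1) (habs 1)
  have s2 := hbound (x 2) (habs 2)
  have s3 := hbound (x 3) (habs 3)
  have sX := hbound (1 - x 0 - x 1) hXabs
  have sY := hbound (1 - x 2 - x 3) hYabs
  -- positivity of all six coordinates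
  have hpos : ∀ t : ℝ, |t - 1/3| ≤ ρ → 0 < t := fun t ht => by
    have := (abs_le.mp ht).1; linarith
  have p0 := hpos _ (habs 0); have p1 := hpos _ (habs 1)
  have p2 := hpos _ (habs 2); have p3 := hpos _ (habs 3)
  have pX := hpos _ hXabs; have pY := hpos _ hYabs
  -- value at the center
  have hGc : G3 β c = -(1/3) + (1/β)*(-(2*Real.log 3)) := by
    show G3 β ![1/3,1/3,1/3,1/3] = _
    have e1 : Real.log ((1:ℝ)/3) = -Real.log 3 := by rw [one_div, Real.log_inv]
    norm_num [G3, e1, Matrix.cons_val_two, Matrix.cons_val_three]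
    ring
  -- rewrite logs in terms of log (3 t)
  have hl : ∀ t : ℝ, 0 < t → t * Real.log t = t * Real.log (3*t) - t * Real.log 3 := by
    intro t ht
    rw [Real.log_mul (by norm_num) ht.ne']
    ring
  have hβ' : β ≠ 0 := ne_of_gt hβ
  have key : 0 ≤ β * (G3 β x - G3 β c) := by
    have hexp : β * (G3 β x - G3 β c) =
        β * (-(x 0 * x 2 + x 1 * x 3 + (1 - x 0 - x 1) * (1 - x 2 - x 3)) + 1/3)
        + (x 0 * Real.log (x 0) + x 1 * Real.log (x 1)
          + (1 - x 0 - x 1) * Real.log (1 - x 0 - x 1)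
          + x 2 * Real.log (x 2) + x 3 * Real.log (x 3)
          + (1 - x 2 - x 3) * Real.log (1 - x 2 - x 3) + 2*Real.log 3) := by
      rw [hGc]
      show β * ((-(x 0 * x 2 + x 1 * x 3 + (1 - x 0 - x 1) * (1 - x 2 - x 3))
        + (1 / β) * (x 0 * Real.log (x 0) + x 1 * Real.log (x 1)
        + (1 - x 0 - x 1) * Real.log (1 - x 0 - x 1)
        + x 2 * Real.log (x 2) + x 3 * Real.log (x 3)
        + (1 - x 2 - x 3) * Real.log (1 - x 2 - x 3))) - (-(1/3) + (1/β)*(-(2*Real.log 3)))) = _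
      field_simp
      ring
    rw [hexp, hl (x 0) p0, hl (x 1) p1, hl (x 2) p2, hl (x 3) p3,
      hl (1 - x 0 - x 1) pX, hl (1 - x 2 - x 3) pY]
    have hsq : 0 ≤ β * (-(x 0 * x 2 + x 1 * x 3 + (1 - x 0 - x 1)*(1 - x 2 - x 3)) + 1/3)
        + (β/2)*((x 0 - 1/3)^2 + (x 1 - 1/3)^2 + ((1 - x 0 - x 1) - 1/3)^2
          + (x 2 - 1/3)^2 + (x 3 - 1/3)^2 + ((1 - x 2 - x 3) - 1/3)^2) := by
      have hring : β * (-(x 0 * x 2 + x 1 * x 3 + (1 - x 0 - x 1)*(1 - x 2 - x 3)) + 1/3)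
          + (β/2)*((x 0 - 1/3)^2 + (x 1 - 1/3)^2 + ((1 - x 0 - x 1) - 1/3)^2
            + (x 2 - 1/3)^2 + (x 3 - 1/3)^2 + ((1 - x 2 - x 3) - 1/3)^2)
          = (β/2) * ((x 0 - x 2)^2 + (x 1 - x 3)^2 + (x 0 + x 1 - x 2 - x 3)^2) := by ring
      rw [hring]
      positivity
    linarith [s0, s1, s2, s3, sX, sY, hsq]
  have hml : β * 0 ≤ β * (G3 β x - G3 β c) := by rw [mul_zero]; exact key
  have := le_of_mul_le_mul_left hml hβ
  linarith

/- ======================= critical point uniqueness ======================= -/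

set_option maxHeartbeats 1000000 in
lemma critical_unique (β : ℝ) (hβ : 0 < β) (hβ₁ : ∀ x ∈ Ioo (0 : ℝ) (1 / 2), β < xi x)
    (p : Fin 4 → ℝ) (hp : p ∈ D3) (hcrit : fderiv ℝ (G3 β) p = 0) :
    p = ![1/3, 1/3, 1/3, 1/3] := by
  obtain ⟨h0, h1, h2, h3, hx12, hy12⟩ := hp
  have hX : (0:ℝ) < 1 - p 0 - p 1 := by linarith
  have hY : (0:ℝ) < 1 - p 2 - p 3 := by linarith
  have hβ' : β ≠ 0 := ne_of_gt hβ
  have hdiff := diffAt β p h0.ne' h1.ne' h2.ne' h3.ne' hX.ne' hY.ne'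
  have hF : HasFDerivAt (G3 β) (0 : (Fin 4 → ℝ) →L[ℝ] ℝ) p := by rw [← hcrit]; exact hdiff.hasFDerivAt
  have hdir : ∀ v : Fin 4 → ℝ, HasDerivAt (fun t : ℝ => G3 β (p + t • v)) 0 0 := by
    intro v
    have hline : HasDerivAt (fun t : ℝ => p + t • v) v 0 := by
      simpa using ((hasDerivAt_id (0:ℝ)).smul_const v).const_add p
    have hF' : HasFDerivAt (G3 β) (0 : (Fin 4 → ℝ) →L[ℝ] ℝ) ((fun t : ℝ => p + t • v) 0) := by simpa using hF
    simpa [Function.comp_def] using hF'.comp_hasDerivAt (0:ℝ) hline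
  -- direction 0
  have heq0 : (fun t : ℝ => G3 β (p + t • (Pi.single 0 1 : Fin 4 → ℝ))) =
      (fun t : ℝ => -((p 0 + t) * p 2 + p 1 * p 3 + ((1 - p 0 - p 1) - t) * (1 - p 2 - p 3))
        + (1/β) * ((p 0 + t) * Real.log (p 0 + t)
          + ((1 - p 0 - p 1) - t) * Real.log ((1 - p 0 - p 1) - t)
          + (p 1 * Real.log (p 1) + p 2 * Real.log (p 2) + p 3 * Real.log (p 3)
            + (1 - p 2 - p 3) * Real.log (1 - p 2 - p 3)))) := by
    funext t; simp [G3, Pi.single_apply]; ring_nf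
  have E0 := (hdAux β (p 0) (1 - p 0 - p 1) (p 2) (1 - p 2 - p 3) (p 1 * p 3)
      (p 1 * Real.log (p 1) + p 2 * Real.log (p 2) + p 3 * Real.log (p 3)
        + (1 - p 2 - p 3) * Real.log (1 - p 2 - p 3)) h0 hX).unique
      (heq0 ▸ hdir (Pi.single 0 1))
  -- direction 1
  have heq1 : (fun t : ℝ => G3 β (p + t • (Pi.single 1 1 : Fin 4 → ℝ))) =
      (fun t : ℝ => -((p 1 + t) * p 3 + p 0 * p 2 + ((1 - p 0 - p 1) - t) * (1 - p 2 - p 3))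
        + (1/β) * ((p 1 + t) * Real.log (p 1 + t)
          + ((1 - p 0 - p 1) - t) * Real.log ((1 - p 0 - p 1) - t)
          + (p 0 * Real.log (p 0) + p 2 * Real.log (p 2) + p 3 * Real.log (p 3)
            + (1 - p 2 - p 3) * Real.log (1 - p 2 - p 3)))) := by
    funext t; simp [G3, Pi.single_apply]; ring_nf
  have E1 := (hdAux β (p 1) (1 - p 0 - p 1) (p 3) (1 - p 2 - p 3) (p 0 * p 2)
      (p 0 * Real.log (p 0) + p 2 * Real.log (p 2) + p 3 * Real.log (p 3)
        + (1 - p 2 - p 3) * Real.log (1 - p 2 - p 3)) h1 hX).unique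
      (heq1 ▸ hdir (Pi.single 1 1))
  -- direction 2
  have heq2 : (fun t : ℝ => G3 β (p + t • (Pi.single 2 1 : Fin 4 → ℝ))) =
      (fun t : ℝ => -((p 2 + t) * p 0 + p 1 * p 3 + ((1 - p 2 - p 3) - t) * (1 - p 0 - p 1))
        + (1/β) * ((p 2 + t) * Real.log (p 2 + t)
          + ((1 - p 2 - p 3) - t) * Real.log ((1 - p 2 - p 3) - t)
          + (p 0 * Real.log (p 0) + p 1 * Real.log (p 1) + p 3 * Real.log (p 3)
            + (1 - p 0 - p 1) * Real.log (1 - p 0 - p 1)))) := by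
    funext t; simp [G3, Pi.single_apply]; ring_nf
  have E2 := (hdAux β (p 2) (1 - p 2 - p 3) (p 0) (1 - p 0 - p 1) (p 1 * p 3)
      (p 0 * Real.log (p 0) + p 1 * Real.log (p 1) + p 3 * Real.log (p 3)
        + (1 - p 0 - p 1) * Real.log (1 - p 0 - p 1)) h2 hY).unique
      (heq2 ▸ hdir (Pi.single 2 1))
  -- direction 3
  have heq3 : (fun t : ℝ => G3 β (p + t • (Pi.single 3 1 : Fin 4 → ℝ))) =
      (fun t : ℝ => -((p 3 + t) * p 1 + p 0 * p 2 + ((1 - p 2 - p 3) - t) * (1 - p 0 - p 1))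
        + (1/β) * ((p 3 + t) * Real.log (p 3 + t)
          + ((1 - p 2 - p 3) - t) * Real.log ((1 - p 2 - p 3) - t)
          + (p 0 * Real.log (p 0) + p 1 * Real.log (p 1) + p 2 * Real.log (p 2)
            + (1 - p 0 - p 1) * Real.log (1 - p 0 - p 1)))) := by
    funext t; simp [G3, Pi.single_apply]; ring_nf
  have E3 := (hdAux β (p 3) (1 - p 2 - p 3) (p 1) (1 - p 0 - p 1) (p 0 * p 2)
      (p 0 * Real.log (p 0) + p 1 * Real.log (p 1) + p 2 * Real.log (p 2)
        + (1 - p 0 - p 1) * Real.log (1 - p 0 - p 1)) h3 hY).unique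
      (heq3 ▸ hdir (Pi.single 3 1))
  -- turn into clean equations
  have e0 : Real.log (p 0) - Real.log (1 - p 0 - p 1) = β * (p 2 - (1 - p 2 - p 3)) := by
    field_simp at E0; linear_combination E0
  have e1 : Real.log (p 1) - Real.log (1 - p 0 - p 1) = β * (p 3 - (1 - p 2 - p 3)) := by
    field_simp at E1; linear_combination E1
  have e2 : Real.log (p 2) - Real.log (1 - p 2 - p 3) = β * (p 0 - (1 - p 0 - p 1)) := by
    field_simp at E2; linear_combination E2
  have e3 : Real.log (p 3) - Real.log (1 - p 2 - p 3) = β * (p 1 - (1 - p 0 - p 1)) := by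
    field_simp at E3; linear_combination E3
  clear E0 E1 E2 E3 heq0 heq1 heq2 heq3 hdir hF hdiff hcrit
  -- step A : x = y
  have m1 := mono_log h0 h2
  have m2 := mono_log h1 h3
  have m3 := mono_log hX hY
  have iden : (p 0 - p 2) * (Real.log (p 0) - Real.log (p 2))
      + (p 1 - p 3) * (Real.log (p 1) - Real.log (p 3))
      + ((1 - p 0 - p 1) - (1 - p 2 - p 3)) * (Real.log (1 - p 0 - p 1) - Real.log (1 - p 2 - p 3))
      = -β * ((p 0 - p 2)^2 + (p 1 - p 3)^2 + ((1 - p 0 - p 1) - (1 - p 2 - p 3))^2) := by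
    linear_combination (p 0 - p 2) * e0 + (p 1 - p 3) * e1 - (p 0 - p 2) * e2 - (p 1 - p 3) * e3
  have hsum : β * ((p 0 - p 2)^2 + (p 1 - p 3)^2 + ((1 - p 0 - p 1) - (1 - p 2 - p 3))^2) ≤ 0 := by
    linarith
  have hsq : (p 0 - p 2)^2 + (p 1 - p 3)^2 + ((1 - p 0 - p 1) - (1 - p 2 - p 3))^2 ≤ 0 := by
    by_contra hpos
    push_neg at hpos
    exact absurd hsum (not_le.mpr (mul_pos hβ hpos))
  have q1 : (p 0 - p 2)^2 = 0 := le_antisymm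
    (by linarith [sq_nonneg (p 1 - p 3), sq_nonneg ((1 - p 0 - p 1) - (1 - p 2 - p 3))])
    (sq_nonneg _)
  have q2 : (p 1 - p 3)^2 = 0 := le_antisymm
    (by linarith [sq_nonneg (p 0 - p 2), sq_nonneg ((1 - p 0 - p 1) - (1 - p 2 - p 3))])
    (sq_nonneg _)
  have h02 : p 2 = p 0 := by
    have := pow_eq_zero_iff (n := 2) (by norm_num) |>.mp q1
    linarith
  have h13 : p 3 = p 1 := by
    have := pow_eq_zero_iff (n := 2) (by norm_num) |>.mp q2
    linarith
  rw [h02, h13] at e2 e3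
  -- e2 : log (p 0) - log (1 - p 0 - p 1) = β * (p 0 - (1 - p 0 - p 1))
  -- e3 : log (p 1) - log (1 - p 0 - p 1) = β * (p 1 - (1 - p 0 - p 1))
  suffices hab : p 0 = 1/3 ∧ p 1 = 1/3 by
    funext i
    fin_cases i <;> simp [h02, h13, hab.1, hab.2]
  by_cases hab : p 0 = p 1
  · by_cases hac : p 0 = 1 - p 0 - p 1
    · constructor <;> linarith
    · exfalso
      apply xi_contra hβ₁ h0 (show p 0 < 1/2 by linarith) (fun hh => hac (by linarith))
      rw [show (1:ℝ) - p 0 - p 1 = 1 - 2*p 0 from by linarith] at e2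
      linear_combination e2
  · by_cases hac : p 0 = 1 - p 0 - p 1
    · exfalso
      apply xi_contra hβ₁ h0 (show p 0 < 1/2 by linarith) (fun hh => hab (by linarith))
      rw [← hac, show p 1 = 1 - 2*p 0 from by linarith] at e3
      linear_combination -e3
    · by_cases hbc : p 1 = 1 - p 0 - p 1
      · exfalso
        apply xi_contra hβ₁ h1 (show p 1 < 1/2 by linarith) (fun hh => hab (by linarith))
        rw [← hbc, show p 0 = 1 - 2*p 1 from by linarith] at e2
        linear_combination -e2
      · exfalso
        exact concave_contra3 (β := β) h0 h1 hX hab hac hbc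
          (by linear_combination e2 - e3) (by linear_combination e3)

/- ======================= main theorem ======================= -/

/-- if 0 < β < ξ(x) for all x ∈ (0,1/2), then (1/3,1/3,1/3,1/3) is the
unique critical point of G_β on D, and the unique local minimum of G_β on D. -/
theorem stmt_7 (β : ℝ) (hβ : 0 < β) (hβ₁ : ∀ x ∈ Ioo (0 : ℝ) (1 / 2), β < xi x) :
    (∀ p ∈ D3, fderiv ℝ (G3 β) p = 0 ↔ p = ![1/3, 1/3, 1/3, 1/3]) ∧
    IsLocalMin (G3 β) ![1/3, 1/3, 1/3, 1/3] ∧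
    (∀ p ∈ D3, IsLocalMin (G3 β) p → p = ![1/3, 1/3, 1/3, 1/3]) := by
  have hβ3 : β < 3 := by
    have h := hβ₁ (1/3) ⟨by norm_num, by norm_num⟩
    simpa [xi] using h
  have hmin := localmin β hβ hβ3
  refine ⟨fun p hp => ⟨critical_unique β hβ hβ₁ p hp, ?_⟩, hmin,
    fun p hp h => critical_unique β hβ hβ₁ p hp h.fderiv_eq_zero⟩
  rintro rfl
  exact hmin.fderiv_eq_zero
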